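/- Fix n ≥ 2 and let (d_1,…,d_r) be a composition of n. If c = (c_1,…,c_{n−1}) and c' = (c'_1,…,c'_{n−1}) are tuples of nonzero rationals such that both (c, w_{d_1,…,d_r}) and (c', w_{d_1,…,d_r}) are admissible, and if |c_{n−D_a}| = |c'_{n−D_a}| for every a ∈ {1,…,r−1}, then |c_i| = |c'_i| for every i ∈ {1,…,n−1}. In other words, up to signs, an admissible modulus c is completely determined by its r−1 entries at the positions n−D_1, …, n−D_{r−1}. -/
import Mathlib

/-- Partial sums `D_a = d_1 + ⋯ + d_a` of a composition (0-indexed: `psum d a = ∑_{b < a} d b`). -/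
def psum (d : ℕ → ℕ) (a : ℕ) : ℕ := ∑ b ∈ Finset.range a, d b

/-- `(c, w_{d_1,…,d_r})` is admissible: `c_{n-i+1} c_{n-i-1} = ± c_{n-i}²` for every
`i ∈ {1,…,n-1} \ {D_1,…,D_{r-1}}` (with the convention `c_0 = c_n = 1`). -/
def IsAdmissible (n r : ℕ) (d : ℕ → ℕ) (c : ℕ → ℚ) : Prop :=
  ∀ i, 1 ≤ i → i ≤ n - 1 → (∀ a, 1 ≤ a → a < r → i ≠ psum d a) →
    c (n - i + 1) * c (n - i - 1) = c (n - i) ^ 2 ∨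
      c (n - i + 1) * c (n - i - 1) = -(c (n - i) ^ 2)
lemma block_ratio (h : ℕ → ℚ) (L R : ℕ) (hLR : L < R)
    (hpos : ∀ j, L ≤ j → j ≤ R → 0 < h j)
    (hrec : ∀ j, L < j → j < R → h (j+1) * h (j-1) = h j ^ 2) :
    ∀ k, L + k ≤ R → h (L + k) = h L * (h (L+1) / h L) ^ k := by
  intro k
  induction k using Nat.strong_induction_on with
  | _ k ih =>
    match k with
    | 0 => intro _; simp
    | 1 =>
      intro hk
      have h0 := hpos L le_rfl (le_of_lt hLR)
      field_simp
    | (k+2) =>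
      intro hk
      have h1 := ih k (by omega) (by omega)
      have h2 := ih (k+1) (by omega) (by omega)
      have hposk : 0 < h (L + k) := hpos (L+k) (by omega) (by omega)
      have h0 : 0 < h L := hpos L le_rfl (le_of_lt hLR)
      have hrc := hrec (L+k+1) (by omega) (by omega)
      have e1 : L + k + 1 + 1 = L + (k+2) := by omega
      have e2 : L + k + 1 - 1 = L + k := by omega
      have e3 : L + k + 1 = L + (k+1) := by omega
      rw [e1, e2, e3] at hrc
      have hq : (0:ℚ) < h (L+1) / h L := div_pos (hpos (L+1) (by omega) (by omega)) h0
      apply mul_right_cancel₀ (b := h (L+k)) (ne_of_gt hposk)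
      rw [hrc, h1, h2]; ring

lemma block_eq (g g' : ℕ → ℚ) (L R : ℕ) (hLR : L < R)
    (hg : ∀ j, L ≤ j → j ≤ R → 0 < g j)
    (hg' : ∀ j, L ≤ j → j ≤ R → 0 < g' j)
    (hrec : ∀ j, L < j → j < R → g (j+1) * g (j-1) = g j ^ 2)
    (hrec' : ∀ j, L < j → j < R → g' (j+1) * g' (j-1) = g' j ^ 2)
    (hL : g L = g' L) (hR : g R = g' R) :
    ∀ j, L ≤ j → j ≤ R → g j = g' j := by
  have h0 : 0 < g L := hg L le_rfl (le_of_lt hLR)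
  have h0' : 0 < g' L := hg' L le_rfl (le_of_lt hLR)
  have hq : 0 < g (L+1) / g L := div_pos (hg (L+1) (by omega) (by omega)) h0
  have hq' : 0 < g' (L+1) / g' L := div_pos (hg' (L+1) (by omega) (by omega)) h0'
  have key := block_ratio g L R hLR hg hrec
  have key' := block_ratio g' L R hLR hg' hrec'
  have hRr := key (R - L) (by omega)
  have hRr' := key' (R - L) (by omega)
  rw [show L + (R - L) = R from by omega] at hRr hRr'
  have hpow : (g (L+1) / g L) ^ (R - L) = (g' (L+1) / g' L) ^ (R - L) := by
    have h1 : g L * (g (L+1) / g L) ^ (R - L) = g L * (g' (L+1) / g' L) ^ (R - L) := by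
      rw [← hRr, hR, hRr', ← hL]
    exact mul_left_cancel₀ (ne_of_gt h0) h1
  have hqq : g (L+1) / g L = g' (L+1) / g' L :=
    (pow_left_inj₀ hq.le hq'.le (by omega : R - L ≠ 0)).mp hpow
  intro j hj1 hj2
  have ha := key (j - L) (by omega)
  have hb := key' (j - L) (by omega)
  rw [show L + (j - L) = j from by omega] at ha hb
  rw [ha, hb, hqq, hL]

lemma psum_mono (d : ℕ → ℕ) {a b : ℕ} (h : a ≤ b) : psum d a ≤ psum d b :=
  Finset.sum_le_sum_of_subset (Finset.range_subset_range.2 h)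

lemma psum_succ (d : ℕ → ℕ) (a : ℕ) : psum d (a+1) = psum d a + d a :=
  Finset.sum_range_succ d a

/-- If `(c, w_{d_1,…,d_r})` and `(c', w_{d_1,…,d_r})` are both admissible and
`|c_{n-D_a}| = |c'_{n-D_a}|` for all `a ∈ {1,…,r-1}`, then `|c_i| = |c'_i|` for all
`i ∈ {1,…,n-1}`: up to signs, an admissible modulus is determined by its entries at the
positions `n-D_1, …, n-D_{r-1}`. -/
theorem stmt11 (n : ℕ) (hn : 2 ≤ n) (r : ℕ) (hr : 0 < r) (d : ℕ → ℕ)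
    (hd : ∀ a < r, 0 < d a) (hsum : psum d r = n)
    (c c' : ℕ → ℚ)
    (hc0 : c 0 = 1) (hcn : c n = 1) (hc0' : c' 0 = 1) (hcn' : c' n = 1)
    (hcne : ∀ i, 1 ≤ i → i ≤ n - 1 → c i ≠ 0)
    (hcne' : ∀ i, 1 ≤ i → i ≤ n - 1 → c' i ≠ 0)
    (hadm : IsAdmissible n r d c) (hadm' : IsAdmissible n r d c')
    (heq : ∀ a, 1 ≤ a → a < r → |c (n - psum d a)| = |c' (n - psum d a)|) :
    ∀ i, 1 ≤ i → i ≤ n - 1 → |c i| = |c' i| := by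
  intro i hi1 hi2
  -- find block index a : psum d (a-1) < n - i ≤ psum d a
  set m := n - i with hm
  have hm1 : 1 ≤ m := by omega
  have hmn : m ≤ n - 1 := by omega
  have hex : ∃ a, m ≤ psum d a := ⟨r, by omega⟩
  set a := Nat.find hex with ha
  have haP : m ≤ psum d a := Nat.find_spec hex
  have har : a ≤ r := Nat.find_le (by omega)
  have ha1 : 1 ≤ a := by
    rcases Nat.eq_zero_or_pos a with h | h
    · exfalso; have := haP; rw [h] at this; simp [psum] at this; omega
    · exact h
  have hprev : psum d (a-1) < m := by
    have := Nat.find_min hex (m := a - 1) (by omega)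
    omega
  have hpa_le : psum d a ≤ n := hsum ▸ psum_mono d har
  have hpa1_lt : psum d (a-1) < psum d a := lt_of_lt_of_le hprev haP
  set L := n - psum d a with hL
  set R := n - psum d (a-1) with hR
  have hLR : L < R := by omega
  have hLi : L ≤ i := by omega
  have hiR : i ≤ R := by omega
  -- positivity
  have gpos : ∀ (f : ℕ → ℚ), f 0 = 1 → f n = 1 → (∀ j, 1 ≤ j → j ≤ n - 1 → f j ≠ 0) →
      ∀ j, L ≤ j → j ≤ R → 0 < |f j| := by
    intro f f0 fn fne j hjL hjR
    rcases Nat.eq_zero_or_pos j with h | h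
    · simp [h, f0]
    rcases eq_or_lt_of_le (show j ≤ n from by omega) with h' | h'
    · simp [h', fn]
    · exact abs_pos.2 (fne j h (by omega))
  -- recurrence
  have grec : ∀ (f : ℕ → ℚ), IsAdmissible n r d f →
      ∀ j, L < j → j < R → |f (j+1)| * |f (j-1)| = |f j| ^ 2 := by
    intro f hadmf j hjL hjR
    set i' := n - j with hi'
    have hji : j = n - i' := by omega
    have hi'1 : 1 ≤ i' := by omega
    have hi'2 : i' ≤ n - 1 := by omega
    have hi'lt : i' < psum d a := by omega
    have hi'gt : psum d (a-1) < i' := by omega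
    have hne : ∀ b, 1 ≤ b → b < r → i' ≠ psum d b := by
      intro b hb1 hb2 hbe
      rcases le_or_gt b (a-1) with h | h
      · have := psum_mono d h; omega
      · have := psum_mono d (show a ≤ b from by omega); omega
    have := hadmf i' hi'1 hi'2 hne
    rw [show n - i' = j from by omega] at this
    rcases this with h | h
    · rw [← abs_mul, h, abs_pow, sq_abs]
    · rw [← abs_mul, h, abs_neg, abs_pow, sq_abs]
  -- endpoint equalities
  have hLeq : |c L| = |c' L| := by
    rcases eq_or_lt_of_le har with h | h
    · have : L = 0 := by rw [hL, h, hsum]; omega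
      rw [this, hc0, hc0']
    · exact heq a ha1 h
  have hReq : |c R| = |c' R| := by
    rcases eq_or_lt_of_le ha1 with h | h
    · have : R = n := by rw [hR, ← h]; simp [psum]
      rw [this, hcn, hcn']
    · exact heq (a-1) (by omega) (by omega)
  exact block_eq (fun j => |c j|) (fun j => |c' j|) L R hLR
    (gpos c hc0 hcn hcne) (gpos c' hc0' hcn' hcne')
    (grec c hadm) (grec c' hadm') hLeq hReq i hLi hiR
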